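/- Let Q be a commutative ring, d ≥ 2, ζ ∈ Q with ∏_{i=0}^{d-1}(t − ζ^i) = t^d − 1 in Q[t], and f, g ∈ Q. For any d-fold matrix factorization X of f and any d-fold matrix factorization Y of g: (i) TX ⊗_ζ Y ≅ T(X ⊗_ζ Y), and T(X ⊗_ζ Y) = X ⊗_ζ TY as tuples of matrices; (ii) for every i ∈ ℤ/d, T^iX ⊗_ζ T^{-i}Y ≅ X ⊗_ζ Y. -/

import Mathlib

open Matrix Polynomial
open scoped Kronecker

namespace MF

variable {Q : Type*} [CommRing Q]

/-- The cyclic product `φ_k * φ_{k+1} * ⋯ * φ_{k+d-1}`. -/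
def cycProd {d : ℕ} {ι : Type*} [Fintype ι] [DecidableEq ι]
    (φ : ZMod d → Matrix ι ι Q) (k : ZMod d) : Matrix ι ι Q :=
  (List.ofFn (fun i : Fin d => φ (k + ((i : ℕ) : ZMod d)))).prod

/-- `φ` is a `d`-fold matrix factorization of `f`. -/
def IsMF (d : ℕ) {ι : Type*} [Fintype ι] [DecidableEq ι] (f : Q)
    (φ : ZMod d → Matrix ι ι Q) : Prop :=
  ∀ k : ZMod d, cycProd φ k = f • (1 : Matrix ι ι Q)

/-- The `i`-fold shift `T^i X`, given by `(T^i X)_k = φ_{k+i}`. -/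
def shift {d : ℕ} {ι : Type*} (i : ZMod d) (φ : ZMod d → Matrix ι ι Q) :
    ZMod d → Matrix ι ι Q :=
  fun k => φ (k + i)

/-- The tensor product `X ⊗_ζ Y` of matrix factorizations. -/
def tensor {d n m : ℕ} (ζ : Q) (φ : ZMod d → Matrix (Fin n) (Fin n) Q)
    (ψ : ZMod d → Matrix (Fin m) (Fin m) Q) :
    ZMod d → Matrix (Fin d × Fin n × Fin m) (Fin d × Fin n × Fin m) Q :=
  fun k => Matrix.of fun p q =>
    (if q.1 = p.1 then
        ζ ^ (p.1 : ℕ) • ((1 : Matrix (Fin n) (Fin n) Q) ⊗ₖ ψ (k - ((p.1 : ℕ) : ZMod d)))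
      else if ((q.1 : ℕ) : ZMod d) = ((p.1 : ℕ) : ZMod d) + 1 then
        φ (((p.1 : ℕ) : ZMod d) + 1) ⊗ₖ (1 : Matrix (Fin m) (Fin m) Q)
      else (0 : Matrix (Fin n × Fin m) (Fin n × Fin m) Q)) p.2 q.2

/-- Isomorphism of `d`-fold matrix factorizations. -/
def Iso {d : ℕ} {ι κ : Type*} [Fintype ι] [Fintype κ] [DecidableEq ι] [DecidableEq κ]
    (Φ : ZMod d → Matrix ι ι Q) (Ψ : ZMod d → Matrix κ κ Q) : Prop :=
  ∃ (α : ZMod d → Matrix κ ι Q) (β : ZMod d → Matrix ι κ Q),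
    (∀ k, α k * β k = 1) ∧ (∀ k, β k * α k = 1) ∧
    (∀ k, α (k - 1) * Φ k = Ψ k * α k)

/-- Direct sum of matrix factorizations. -/
def dsum {d : ℕ} {ι κ : Type*} (φ : ZMod d → Matrix ι ι Q) (ψ : ZMod d → Matrix κ κ Q) :
    ZMod d → Matrix (ι ⊕ κ) (ι ⊕ κ) Q :=
  fun k => Matrix.fromBlocks (φ k) 0 0 (ψ k)

/-- Direct sum of a finite family of matrix factorizations with the same underlying size. -/
def dsumFam {d t : ℕ} {ι : Type*} (Z : Fin t → (ZMod d → Matrix ι ι Q)) :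
    ZMod d → Matrix (Fin t × ι) (Fin t × ι) Q :=
  fun k => Matrix.of fun p q => if p.1 = q.1 then Z p.1 k p.2 q.2 else 0

/-- A matrix factorization (of positive rank) is indecomposable if it is not isomorphic to a
direct sum of two matrix factorizations of positive rank. -/
def Indecomposable (d : ℕ) {ι : Type*} [Fintype ι] [DecidableEq ι] (f : Q)
    (φ : ZMod d → Matrix ι ι Q) : Prop :=
  Nonempty ι ∧
    ¬ ∃ (n₁ n₂ : ℕ) (ψ₁ : ZMod d → Matrix (Fin n₁) (Fin n₁) Q)
        (ψ₂ : ZMod d → Matrix (Fin n₂) (Fin n₂) Q),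
        0 < n₁ ∧ 0 < n₂ ∧ IsMF d f ψ₁ ∧ IsMF d f ψ₂ ∧ Iso φ (dsum ψ₁ ψ₂)

/-- A matrix factorization over a local ring is reduced if all entries of its matrices lie in
the maximal ideal. -/
def Reduced [IsLocalRing Q] {d : ℕ} {ι : Type*} (φ : ZMod d → Matrix ι ι Q) : Prop :=
  ∀ (k : ZMod d) (p q : ι), φ k p q ∈ IsLocalRing.maximalIdeal Q

/-- A matrix factorization over a local `K`-algebra with residue field `K` is strongly
indecomposable (Definition 5.1). -/
def StronglyIndec (K : Type*) [Field K] [Algebra K Q] [IsLocalRing Q]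
    {d : ℕ} {ι : Type*} [Fintype ι] [DecidableEq ι]
    (φ : ZMod d → Matrix ι ι Q) : Prop :=
  (∀ j l : ZMod d, j ≠ l → ∀ α β : Matrix ι ι Q,
      α * φ j = φ l * β →
      (∀ p q, α p q ∈ IsLocalRing.maximalIdeal Q) ∧
      (∀ p q, β p q ∈ IsLocalRing.maximalIdeal Q)) ∧
  (∀ (l : ZMod d) (α β : Matrix ι ι Q),
      α * φ l = φ l * β →
      ∃ ξ : K, (∀ p q, (α - algebraMap K Q ξ • (1 : Matrix ι ι Q)) p q ∈
                  IsLocalRing.maximalIdeal Q) ∧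
               (∀ p q, (β - algebraMap K Q ξ • (1 : Matrix ι ι Q)) p q ∈
                  IsLocalRing.maximalIdeal Q))

end MF

namespace MFAux

set_option linter.unusedSectionVars false
set_option linter.dupNamespace false

variable {Q : Type*} [CommRing Q]

theorem zeta_pow_d (d : ℕ) (hd : 2 ≤ d) (ζ : Q)
    (hζ : ∏ i ∈ Finset.range d, (Polynomial.X - Polynomial.C (ζ ^ i)) =
      Polynomial.X ^ d - 1) : ζ ^ d = 1 := by
  have h := congrArg (Polynomial.eval ζ) hζ
  rw [Polynomial.eval_prod, Finset.prod_eq_zero (Finset.mem_range.mpr (by omega : 1 < d))] at h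
  · simp only [Polynomial.eval_sub, Polynomial.eval_pow, Polynomial.eval_X,
      Polynomial.eval_one] at h
    linear_combination -h
  · simp [pow_one]

def Zp {d : ℕ} (ζ : Q) (s : ZMod d) : Q := ζ ^ s.val

variable {d : ℕ} [NeZero d] {ζ : Q}

theorem Zp_natCast (hz : ζ ^ d = 1) (a : ℕ) : Zp (d := d) ζ (a : ZMod d) = ζ ^ a := by
  unfold Zp
  rw [ZMod.val_natCast]
  conv_rhs => rw [← Nat.mod_add_div a d]
  rw [pow_add, pow_mul, hz, one_pow, mul_one]

theorem Zp_add (hz : ζ ^ d = 1) (s t : ZMod d) : Zp ζ (s + t) = Zp ζ s * Zp ζ t := by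
  have h1 : s + t = ((s.val + t.val : ℕ) : ZMod d) := by
    rw [Nat.cast_add, ZMod.natCast_zmod_val, ZMod.natCast_zmod_val]
  rw [h1, Zp_natCast hz, pow_add]; rfl

theorem Zp_zero : Zp (d := d) ζ 0 = 1 := by
  unfold Zp; simp

theorem Zp_inv (hz : ζ ^ d = 1) (s : ZMod d) : Zp ζ s * Zp ζ (-s) = 1 := by
  rw [← Zp_add hz, add_neg_cancel, Zp_zero]

def toFin {d : ℕ} [NeZero d] (c : ZMod d) : Fin d := ⟨c.val, ZMod.val_lt c⟩

theorem toFin_spec (c : ZMod d) : (((toFin c : ℕ)) : ZMod d) = c := ZMod.natCast_zmod_val c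

theorem cast_eq_iff (l : Fin d) (c : ZMod d) : (((l : ℕ)) : ZMod d) = c ↔ l = toFin c := by
  constructor
  · intro h
    apply Fin.ext
    have := congrArg ZMod.val h
    rwa [ZMod.val_natCast_of_lt l.isLt] at this
  · rintro rfl; exact toFin_spec c

theorem toFin_fin (l : Fin d) : toFin (((l : ℕ)) : ZMod d) = l :=
  ((cast_eq_iff l _).mp rfl).symm

theorem toFin_inj {a b : ZMod d} (h : toFin a = toFin b) : a = b := by
  rw [← toFin_spec a, ← toFin_spec b, h]

variable {n m : ℕ}

def amat (n m : ℕ) (ζ : Q) {d : ℕ} [NeZero d] (k : ZMod d) :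
    Matrix (Fin d × Fin n × Fin m) (Fin d × Fin n × Fin m) Q :=
  Matrix.of fun p q =>
    if q = (toFin (((p.1 : ℕ) : ZMod d) - 1), p.2) then Zp ζ (((p.1 : ℕ) : ZMod d) - k) else 0

def bmat (n m : ℕ) (ζ : Q) {d : ℕ} [NeZero d] (k : ZMod d) :
    Matrix (Fin d × Fin n × Fin m) (Fin d × Fin n × Fin m) Q :=
  Matrix.of fun p q =>
    if q = (toFin (((p.1 : ℕ) : ZMod d) + 1), p.2) then Zp ζ (k - ((p.1 : ℕ) : ZMod d) - 1) else 0

theorem amat_col (k : ZMod d) (p q : Fin d × Fin n × Fin m) :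
    amat n m ζ k p q =
      if p = (toFin (((q.1 : ℕ) : ZMod d) + 1), q.2)
      then Zp ζ (((q.1 : ℕ) : ZMod d) + 1 - k) else 0 := by
  show (if q = (toFin (((p.1 : ℕ) : ZMod d) - 1), p.2) then Zp ζ (((p.1 : ℕ) : ZMod d) - k) else 0)
      = _
  have hcond : (q = (toFin (((p.1 : ℕ) : ZMod d) - 1), p.2)) ↔
      (p = (toFin (((q.1 : ℕ) : ZMod d) + 1), q.2)) := by
    constructor
    · rintro rfl
      simp only [toFin_spec, sub_add_cancel, toFin_fin, Prod.mk.eta]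
    · rintro rfl
      simp only [toFin_spec, add_sub_cancel_right, toFin_fin, Prod.mk.eta]
  by_cases h : q = (toFin (((p.1 : ℕ) : ZMod d) - 1), p.2)
  · rw [if_pos h, if_pos (hcond.mp h)]
    subst h
    simp [toFin_spec]
  · rw [if_neg h, if_neg (fun h' => h (hcond.mpr h'))]

theorem mul_amat_left (k : ZMod d) (X : Matrix (Fin d × Fin n × Fin m) (Fin d × Fin n × Fin m) Q)
    (p q : Fin d × Fin n × Fin m) :
    (amat n m ζ k * X) p q =
      Zp ζ (((p.1 : ℕ) : ZMod d) - k) * X (toFin (((p.1 : ℕ) : ZMod d) - 1), p.2) q := by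
  rw [Matrix.mul_apply]
  simp only [amat, Matrix.of_apply, ite_mul, zero_mul]
  rw [Finset.sum_ite_eq' Finset.univ]
  simp

theorem mul_amat_right (k : ZMod d) (X : Matrix (Fin d × Fin n × Fin m) (Fin d × Fin n × Fin m) Q)
    (p q : Fin d × Fin n × Fin m) :
    (X * amat n m ζ k) p q =
      X p (toFin (((q.1 : ℕ) : ZMod d) + 1), q.2) * Zp ζ (((q.1 : ℕ) : ZMod d) + 1 - k) := by
  rw [Matrix.mul_apply]
  simp only [amat_col, mul_ite, mul_zero]
  rw [Finset.sum_ite_eq' Finset.univ]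
  simp

theorem mul_bmat_left (k : ZMod d) (X : Matrix (Fin d × Fin n × Fin m) (Fin d × Fin n × Fin m) Q)
    (p q : Fin d × Fin n × Fin m) :
    (bmat n m ζ k * X) p q =
      Zp ζ (k - ((p.1 : ℕ) : ZMod d) - 1) * X (toFin (((p.1 : ℕ) : ZMod d) + 1), p.2) q := by
  rw [Matrix.mul_apply]
  simp only [bmat, Matrix.of_apply, ite_mul, zero_mul]
  rw [Finset.sum_ite_eq' Finset.univ]
  simp

theorem amat_mul_bmat (hz : ζ ^ d = 1) (k : ZMod d) :
    amat n m ζ k * bmat n m ζ k = 1 := by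
  ext p q
  rw [mul_amat_left]
  show Zp ζ _ * (if q = (toFin ((((toFin (((p.1:ℕ):ZMod d) - 1) : Fin d) : ℕ) : ZMod d) + 1), p.2)
      then Zp ζ (k - (((toFin (((p.1:ℕ):ZMod d) - 1) : Fin d) : ℕ) : ZMod d) - 1) else 0) = _
  rw [toFin_spec, sub_add_cancel, toFin_fin]
  rcases eq_or_ne q p with rfl | hne
  · rw [if_pos (by simp), Matrix.one_apply_eq]
    have : k - (((q.1:ℕ):ZMod d) - 1) - 1 = -(((q.1:ℕ):ZMod d) - k) := by ring
    rw [this, Zp_inv hz]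
  · rw [if_neg (by simpa [Prod.ext_iff] using fun h1 h2 => hne (Prod.ext h1 h2)),
      Matrix.one_apply_ne (Ne.symm hne), mul_zero]

theorem bmat_mul_amat (hz : ζ ^ d = 1) (k : ZMod d) :
    bmat n m ζ k * amat n m ζ k = 1 := by
  ext p q
  rw [mul_bmat_left]
  show Zp ζ _ * (if q = (toFin ((((toFin (((p.1:ℕ):ZMod d) + 1) : Fin d) : ℕ) : ZMod d) - 1), p.2)
      then Zp ζ ((((toFin (((p.1:ℕ):ZMod d) + 1) : Fin d) : ℕ) : ZMod d) - k) else 0) = _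
  rw [toFin_spec, add_sub_cancel_right, toFin_fin]
  rcases eq_or_ne q p with rfl | hne
  · rw [if_pos (by simp), Matrix.one_apply_eq]
    have : ((q.1:ℕ):ZMod d) + 1 - k = -(k - ((q.1:ℕ):ZMod d) - 1) := by ring
    rw [this, Zp_inv hz]
  · rw [if_neg (by simpa [Prod.ext_iff] using fun h1 h2 => hne (Prod.ext h1 h2)),
      Matrix.one_apply_ne (Ne.symm hne), mul_zero]

theorem pow_toFin (c : ZMod d) : ζ ^ (((toFin c : Fin d)) : ℕ) = Zp ζ c := rfl

theorem pow_fin (l : Fin d) : ζ ^ ((l : ℕ)) = Zp ζ (((l : ℕ)) : ZMod d) := by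
  unfold Zp; rw [ZMod.val_natCast_of_lt l.isLt]

theorem toFin_eq_fin_iff (c : ZMod d) (l : Fin d) : toFin c = l ↔ c = (((l : ℕ)) : ZMod d) := by
  rw [eq_comm, ← cast_eq_iff, eq_comm]

theorem step_rel (hd : 2 ≤ d) (hz : ζ ^ d = 1)
    (φ : ZMod d → Matrix (Fin n) (Fin n) Q) (ψ : ZMod d → Matrix (Fin m) (Fin m) Q)
    (s k : ZMod d) :
    amat n m ζ (k - 1) * MF.tensor ζ (MF.shift 1 φ) (MF.shift s ψ) k
      = MF.tensor ζ φ (MF.shift (s + 1) ψ) k * amat n m ζ k := by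
  have hone : (1 : ZMod d) ≠ 0 := by
    haveI : Fact (1 < d) := ⟨by omega⟩
    exact one_ne_zero
  ext p q
  rw [mul_amat_left, mul_amat_right]
  simp only [MF.tensor, MF.shift, Matrix.of_apply]
  rw [toFin_spec, toFin_spec]
  set ic : ZMod d := ((p.1 : ℕ) : ZMod d) with hic
  set jc : ZMod d := ((q.1 : ℕ) : ZMod d) with hjc
  by_cases h1 : jc = ic - 1
  · have hq1 : q.1 = toFin (ic - 1) := (cast_eq_iff q.1 _).mp h1
    have hr : toFin (jc + 1) = p.1 := by
      rw [toFin_eq_fin_iff, h1]; ring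
    rw [if_pos hq1, if_pos hr]
    rw [pow_toFin, pow_fin p.1, ← hic]
    rw [Matrix.smul_apply, Matrix.smul_apply, smul_eq_mul, smul_eq_mul]
    have e2 : k - (ic - 1) + s = k - ic + (s + 1) := by ring
    rw [e2, h1]
    have e4 : (ic - (k - 1)) + (ic - 1) = ic + (ic - 1 + 1 - k) := by ring
    rw [mul_right_comm (Zp ζ ic), ← Zp_add hz, ← mul_assoc, ← Zp_add hz, e4]
  · have hq1 : ¬ q.1 = toFin (ic - 1) := fun h => h1 (by rw [h] at hjc; rw [hjc, toFin_spec])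
    have hr : ¬ toFin (jc + 1) = p.1 := by
      rw [toFin_eq_fin_iff, ← hic]
      intro h
      exact h1 (by linear_combination h)
    rw [if_neg hq1, if_neg hr]
    by_cases h2 : jc = ic
    · have c1 : jc = ic - 1 + 1 := by rw [h2]; ring
      have c2 : jc + 1 = ic + 1 := by rw [h2]
      rw [if_pos c1, if_pos c2]
      have e3 : ic - 1 + 1 + 1 = ic + 1 := by ring
      rw [e3, h2]
      have e4 : ic - (k - 1) = ic + 1 - k := by ring
      rw [e4, mul_comm]
    · have c1 : ¬ jc = ic - 1 + 1 := by
        intro h; exact h2 (by linear_combination h)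
      have c2 : ¬ jc + 1 = ic + 1 := by
        intro h; exact h2 (by linear_combination h)
      rw [if_neg c1, if_neg c2]
      simp

theorem step_iso (hd : 2 ≤ d) (hz : ζ ^ d = 1)
    (φ : ZMod d → Matrix (Fin n) (Fin n) Q) (ψ : ZMod d → Matrix (Fin m) (Fin m) Q)
    (s : ZMod d) :
    MF.Iso (MF.tensor ζ (MF.shift 1 φ) (MF.shift s ψ)) (MF.tensor ζ φ (MF.shift (s + 1) ψ)) :=
  ⟨fun k => amat n m ζ k, fun k => bmat n m ζ k, fun k => amat_mul_bmat hz k,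
    fun k => bmat_mul_amat hz k, fun k => step_rel hd hz φ ψ s k⟩

theorem iso_refl {ι : Type*} [Fintype ι] [DecidableEq ι]
    (Φ : ZMod d → Matrix ι ι Q) : MF.Iso Φ Φ :=
  ⟨fun _ => 1, fun _ => 1, fun _ => by simp, fun _ => by simp, fun _ => by simp⟩

theorem iso_trans {ι κ χ : Type*} [Fintype ι] [Fintype κ] [Fintype χ]
    [DecidableEq ι] [DecidableEq κ] [DecidableEq χ]
    {Φ : ZMod d → Matrix ι ι Q} {Ψ : ZMod d → Matrix κ κ Q} {Χ : ZMod d → Matrix χ χ Q}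
    (h1 : MF.Iso Φ Ψ) (h2 : MF.Iso Ψ Χ) : MF.Iso Φ Χ := by
  obtain ⟨α, β, hαβ, hβα, hrel⟩ := h1
  obtain ⟨α', β', hαβ', hβα', hrel'⟩ := h2
  refine ⟨fun k => α' k * α k, fun k => β k * β' k, ?_, ?_, ?_⟩
  · intro k
    dsimp only
    rw [Matrix.mul_assoc, ← Matrix.mul_assoc (α k), hαβ k, Matrix.one_mul, hαβ' k]
  · intro k
    dsimp only
    rw [Matrix.mul_assoc, ← Matrix.mul_assoc (β' k), hβα' k, Matrix.one_mul, hβα k]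
  · intro k
    dsimp only
    rw [Matrix.mul_assoc, hrel k, ← Matrix.mul_assoc, hrel' k, Matrix.mul_assoc]

theorem shift_zero {ι : Type*} (φ : ZMod d → Matrix ι ι Q) : MF.shift (0 : ZMod d) φ = φ :=
  funext fun k => by simp [MF.shift]

theorem shift_shift {ι : Type*} (i j : ZMod d) (φ : ZMod d → Matrix ι ι Q) :
    MF.shift i (MF.shift j φ) = MF.shift (i + j) φ :=
  funext fun k => by simp only [MF.shift]; ring_nf

theorem tensor_shift_eq (φ : ZMod d → Matrix (Fin n) (Fin n) Q)
    (ψ : ZMod d → Matrix (Fin m) (Fin m) Q) (ζ : Q) :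
    MF.shift 1 (MF.tensor ζ φ ψ) = MF.tensor ζ φ (MF.shift 1 ψ) := by
  funext k
  simp only [MF.shift, MF.tensor]
  congr 1
  funext p q
  have e : k + 1 - ((p.1 : ℕ) : ZMod d) = k - ((p.1 : ℕ) : ZMod d) + 1 := by ring
  rw [e]

end MFAux

/-- interaction of the tensor product with shifts. -/
theorem tensor_shift {Q : Type*} [CommRing Q] (d : ℕ) (hd : 2 ≤ d) (ζ : Q)
    (hζ : ∏ i ∈ Finset.range d, (Polynomial.X - Polynomial.C (ζ ^ i)) =
      Polynomial.X ^ d - 1)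
    (f g : Q) (n m : ℕ)
    (φ : ZMod d → Matrix (Fin n) (Fin n) Q) (hφ : MF.IsMF d f φ)
    (ψ : ZMod d → Matrix (Fin m) (Fin m) Q) (hψ : MF.IsMF d g ψ) :
    (MF.Iso (MF.tensor ζ (MF.shift 1 φ) ψ) (MF.shift 1 (MF.tensor ζ φ ψ)) ∧
      MF.shift 1 (MF.tensor ζ φ ψ) = MF.tensor ζ φ (MF.shift 1 ψ)) ∧
    (∀ i : ZMod d,
      MF.Iso (MF.tensor ζ (MF.shift i φ) (MF.shift (-i) ψ)) (MF.tensor ζ φ ψ)) := by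
  haveI : NeZero d := ⟨by omega⟩
  have hz : ζ ^ d = 1 := MFAux.zeta_pow_d d hd ζ hζ
  have heq : MF.shift 1 (MF.tensor ζ φ ψ) = MF.tensor ζ φ (MF.shift 1 ψ) :=
    MFAux.tensor_shift_eq φ ψ ζ
  refine ⟨⟨?_, heq⟩, ?_⟩
  · rw [heq]
    have h := MFAux.step_iso hd hz φ ψ 0
    rwa [MFAux.shift_zero, zero_add] at h
  · intro i
    have key : ∀ t : ℕ, MF.Iso (MF.tensor ζ (MF.shift ((t : ℕ) : ZMod d) φ)
        (MF.shift (-((t : ℕ) : ZMod d)) ψ)) (MF.tensor ζ φ ψ) := by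
      intro t
      induction t with
      | zero =>
        rw [Nat.cast_zero, neg_zero, MFAux.shift_zero, MFAux.shift_zero]
        exact MFAux.iso_refl _
      | succ t ih =>
        have h1 := MFAux.step_iso hd hz (MF.shift ((t : ℕ) : ZMod d) φ) ψ
          (-(1 + ((t : ℕ) : ZMod d)))
        rw [MFAux.shift_shift] at h1
        have e3 : -(1 + ((t : ℕ) : ZMod d)) + 1 = -((t : ℕ) : ZMod d) := by ring
        rw [e3] at h1
        have e1 : (((t + 1 : ℕ)) : ZMod d) = 1 + ((t : ℕ) : ZMod d) := by push_cast; ring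
        rw [e1]
        exact MFAux.iso_trans h1 ih
    have h := key i.val
    rwa [ZMod.natCast_zmod_val] at h
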